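/- For any computably enumerable sets X, Y ⊆ ℕ there exists d ∈ ℕ such that C((X ∪ Y)↾n) ≤ max{C(X↾n), C(Y↾n)} + d for all n ∈ ℕ. -/

import Mathlib

open Filter

noncomputable section

/-- A real is *regainingly approximable* if some computable nondecreasing rational
sequence converging to it is within `2⁻ⁿ` of it for infinitely many `n`. -/
def RegainApprox (α : ℝ) : Prop :=
  ∃ a : ℕ → ℚ, Computable a ∧ Monotone a ∧
    Tendsto (fun n => (a n : ℝ)) atTop (nhds α) ∧
    ∃ᶠ n in atTop, α - (a n : ℝ) < (2 : ℝ)⁻¹ ^ n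

def LeftComputable (α : ℝ) : Prop :=
  ∃ a : ℕ → ℚ, Computable a ∧ Monotone a ∧
    Tendsto (fun n => (a n : ℝ)) atTop (nhds α)

def ComputableReal (α : ℝ) : Prop :=
  ∃ a : ℕ → ℚ, Computable a ∧ ∀ n, |α - (a n : ℝ)| < (2 : ℝ)⁻¹ ^ n

/-- The real number `2^{-A}`. -/
def realOfSet (A : Set ℕ) : ℝ := ∑' a : A, (2 : ℝ)⁻¹ ^ ((a : ℕ) + 1)

/-- A set is regainingly approximable if it is c.e. and `2^{-A}` is regainingly approximable. -/
def RegainApproxSet (A : Set ℕ) : Prop :=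
  REPred (· ∈ A) ∧ RegainApprox (realOfSet A)

/-- A machine has prefix-free domain. -/
def PrefixFreeDom (U : List Bool →. List Bool) : Prop :=
  ∀ p q : List Bool, p <+: q → (U p).Dom → (U q).Dom → p = q

/-- The Kolmogorov complexity of `w` relative to the machine `U` (∞ if no program). -/
def mCplx (U : List Bool →. List Bool) (w : List Bool) : ℕ∞ :=
  sInf {c : ℕ∞ | ∃ p : List Bool, w ∈ U p ∧ (p.length : ℕ∞) = c}

/-- `U` is an optimal (universal up to a constant) machine for plain complexity. -/
def OptimalPlain (U : List Bool →. List Bool) : Prop :=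
  Partrec U ∧ ∀ V : List Bool →. List Bool, Partrec V →
    ∃ d : ℕ, ∀ w, mCplx U w ≤ mCplx V w + (d : ℕ∞)

/-- `U` is an optimal prefix-free machine. -/
def OptimalPrefix (U : List Bool →. List Bool) : Prop :=
  Partrec U ∧ PrefixFreeDom U ∧
    ∀ V : List Bool →. List Bool, Partrec V → PrefixFreeDom V →
      ∃ d : ℕ, ∀ w, mCplx U w ≤ mCplx V w + (d : ℕ∞)

open Classical in
/-- The first `n` bits of the characteristic sequence of `A`. -/
def setSeg (A : Set ℕ) (n : ℕ) : List Bool := (List.range n).map fun i => decide (i ∈ A)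


open Nat.Partrec (Code)
open Nat.Partrec.Code

namespace Stmt17Aux
open Classical

def apx (c : Code) (s i : ℕ) : Bool := (evaln s c i).isSome

lemma apx_mono {c : Code} {s t i : ℕ} (h : s ≤ t) (ha : apx c s i = true) :
    apx c t i = true := by
  unfold apx at *
  rcases Option.isSome_iff_exists.1 ha with ⟨x, hx⟩
  exact Option.isSome_iff_exists.2 ⟨x, evaln_mono h hx⟩

def segA (c : Code) (s n : ℕ) : List Bool := (List.range n).map fun i => apx c s i

def uSeg (c₁ c₂ : Code) (s n : ℕ) : List Bool :=
  (List.range n).map fun i => apx c₁ s i || apx c₂ s i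

def machV (U : List Bool →. List Bool) (c₁ c₂ : Code) : List Bool →. List Bool :=
  fun l =>
    (Part.ofOption l.head?).bind fun b =>
      (U l.tail).bind fun w =>
        (Nat.rfind fun s =>
            Part.some (decide (segA (bif b then c₁ else c₂) s w.length = w))).map
          fun s => uSeg c₁ c₂ s w.length

lemma apx_primrec (c : Code) : Primrec₂ (apx c) := by
  have := Nat.Partrec.Code.primrec_evaln
  exact Primrec.option_isSome.comp
    (this.comp ((Primrec.fst.pair (Primrec.const c)).pair Primrec.snd))

lemma segA_primrec (c : Code) : Primrec₂ (segA c) := by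
  unfold segA
  exact (Primrec.list_map (Primrec.list_range.comp Primrec.snd)
    ((apx_primrec c).comp (Primrec.fst.comp Primrec.fst) Primrec.snd).to₂).to₂

lemma uSeg_primrec (c₁ c₂ : Code) : Primrec₂ (uSeg c₁ c₂) := by
  unfold uSeg
  have h : Primrec₂ (fun (p : ℕ × ℕ) (i : ℕ) => apx c₁ p.1 i || apx c₂ p.1 i) := by
    have h1 : Primrec fun q : (ℕ × ℕ) × ℕ => apx c₁ q.1.1 q.2 :=
      (apx_primrec c₁).comp (Primrec.fst.comp Primrec.fst) Primrec.snd
    have h2 : Primrec fun q : (ℕ × ℕ) × ℕ => apx c₂ q.1.1 q.2 :=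
      (apx_primrec c₂).comp (Primrec.fst.comp Primrec.fst) Primrec.snd
    exact (Primrec.cond h1 (Primrec.const true) h2).of_eq (by
      intro q; cases hq : apx c₁ q.1.1 q.2 <;> simp [hq])
  exact (Primrec.list_map (Primrec.list_range.comp Primrec.snd) h).to₂

lemma machV_partrec {U : List Bool →. List Bool} (hU : Partrec U) (c₁ c₂ : Code) :
    Partrec (machV U c₁ c₂) := by
  unfold machV
  apply Partrec.bind (Computable.ofOption Primrec.list_head?.to_comp)
  apply Partrec.bind (hU.comp (Primrec.list_tail.comp Primrec.fst).to_comp)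
  -- now goal: Partrec₂ fun (p : List Bool × Bool) (w : List Bool) => (rfind ...).map ...
  apply Partrec.map
  · apply Partrec.rfind
    apply Computable₂.partrec₂
    apply Computable₂.mk
    have hpred : Primrec fun q : ((List Bool × Bool) × List Bool) × ℕ =>
        decide (segA (bif q.1.1.2 then c₁ else c₂) q.2 q.1.2.length = q.1.2) := by
      have hc : Primrec fun q : ((List Bool × Bool) × List Bool) × ℕ =>
          segA (bif q.1.1.2 then c₁ else c₂) q.2 q.1.2.length := by
        have hb : Primrec fun q : ((List Bool × Bool) × List Bool) × ℕ => q.1.1.2 :=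
          Primrec.snd.comp (Primrec.fst.comp Primrec.fst)
        have h1 : Primrec fun q : ((List Bool × Bool) × List Bool) × ℕ =>
            segA c₁ q.2 q.1.2.length :=
          (segA_primrec c₁).comp Primrec.snd
            (Primrec.list_length.comp (Primrec.snd.comp Primrec.fst))
        have h2 : Primrec fun q : ((List Bool × Bool) × List Bool) × ℕ =>
            segA c₂ q.2 q.1.2.length :=
          (segA_primrec c₂).comp Primrec.snd
            (Primrec.list_length.comp (Primrec.snd.comp Primrec.fst))
        exact (Primrec.cond hb h1 h2).of_eq (by intro q; cases q.1.1.2 <;> rfl)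
      exact (Primrec.eq.comp hc (Primrec.snd.comp Primrec.fst)).decide
    exact hpred.to_comp
  · apply Computable₂.mk
    exact ((uSeg_primrec c₁ c₂).comp Primrec.snd
      (Primrec.list_length.comp (Primrec.snd.comp Primrec.fst))).to_comp


-- obtaining a code from RePred
lemma exists_code_of_re {X : Set ℕ} (hX : REPred (· ∈ X)) :
    ∃ c : Code, ∀ i, i ∈ X ↔ ∃ s, apx c s i = true := by
  have h1 : Partrec fun n : ℕ => (Part.assert (n ∈ X) fun _ => Part.some ()).map
      fun _ => (0 : ℕ) := hX.map ((Computable.const 0).comp Computable.fst).to₂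
  obtain ⟨c, hc⟩ := exists_code.1 (Partrec.nat_iff.1 h1)
  refine ⟨c, fun i => ?_⟩
  have hdom : (eval c i).Dom ↔ i ∈ X := by
    rw [hc]; simp [Part.assert]
  constructor
  · intro hi
    have hd : (eval c i).Dom := hdom.2 hi
    obtain ⟨s, hs⟩ := evaln_complete.1 (Part.get_mem hd)
    exact ⟨s, Option.isSome_iff_exists.2 ⟨_, hs⟩⟩
  · rintro ⟨s, hs⟩
    rcases Option.isSome_iff_exists.1 hs with ⟨x, hx⟩
    exact hdom.1 (Part.dom_iff_mem.2 ⟨_, evaln_complete.2 ⟨s, hx⟩⟩)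

variable {X : Set ℕ} {c : Code}

open Classical in
lemma apx_eq_iff (hc : ∀ i, i ∈ X ↔ ∃ s, apx c s i = true) {s i : ℕ} :
    apx c s i = decide (i ∈ X) ↔ (i ∈ X → apx c s i = true) := by
  by_cases hi : i ∈ X
  · simp [hi]
  · have : apx c s i = false := by
      by_contra h
      exact hi ((hc i).2 ⟨s, eq_true_of_ne_false h⟩)
    simp [hi, this]

lemma settle_exists (hc : ∀ i, i ∈ X ↔ ∃ s, apx c s i = true) (n : ℕ) :
    ∃ s, ∀ i < n, apx c s i = decide (i ∈ X) := by
  induction n with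
  | zero => exact ⟨0, fun i hi => absurd hi (Nat.not_lt_zero i)⟩
  | succ n ih =>
    obtain ⟨s, hs⟩ := ih
    by_cases hn : n ∈ X
    · obtain ⟨t, ht⟩ := (hc n).1 hn
      refine ⟨max s t, fun i hi => ?_⟩
      rcases Nat.lt_succ_iff_lt_or_eq.1 hi with hi | rfl
      · exact (apx_eq_iff hc).2 fun hiX =>
          apx_mono (le_max_left s t) (((apx_eq_iff hc).1 (hs i hi)) hiX)
      · exact (apx_eq_iff hc).2 fun _ => apx_mono (le_max_right s t) ht
    · refine ⟨s, fun i hi => ?_⟩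
      rcases Nat.lt_succ_iff_lt_or_eq.1 hi with hi | rfl
      · exact hs i hi
      · exact (apx_eq_iff hc).2 fun hiX => absurd hiX hn

lemma settle_mono (hc : ∀ i, i ∈ X ↔ ∃ s, apx c s i = true) {n s t : ℕ} (hst : s ≤ t)
    (hs : ∀ i < n, apx c s i = decide (i ∈ X)) : ∀ i < n, apx c t i = decide (i ∈ X) :=
  fun i hi => (apx_eq_iff hc).2 fun hiX =>
    apx_mono hst (((apx_eq_iff hc).1 (hs i hi)) hiX)

lemma segA_eq_setSeg (hc : ∀ i, i ∈ X ↔ ∃ s, apx c s i = true) {s n : ℕ} :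
    segA c s n = setSeg X n ↔ ∀ i < n, apx c s i = decide (i ∈ X) := by
  unfold segA setSeg
  rw [List.map_inj_left]
  constructor
  · intro h i hi
    have := h i (List.mem_range.2 hi)
    rw [this]
  · intro h i hi
    rw [h i (List.mem_range.1 hi)]

-- mCplx lemmas
lemma mCplx_le_of_mem {U : List Bool →. List Bool} {w p : List Bool} (h : w ∈ U p) :
    mCplx U w ≤ (p.length : ℕ∞) :=
  sInf_le ⟨p, h, rfl⟩

lemma mCplx_attained {U : List Bool →. List Bool} {w : List Bool}
    (h : mCplx U w ≠ ⊤) : ∃ p : List Bool, w ∈ U p ∧ (p.length : ℕ∞) = mCplx U w := by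
  classical
  set S : Set ℕ∞ := {c : ℕ∞ | ∃ p : List Bool, w ∈ U p ∧ (p.length : ℕ∞) = c} with hS
  have hSne : S.Nonempty := by
    by_contra hne
    rw [Set.not_nonempty_iff_eq_empty] at hne
    exact h (by rw [mCplx, ← hS, hne, sInf_empty])
  set T : Set ℕ := {k : ℕ | ∃ p : List Bool, w ∈ U p ∧ p.length = k} with hT
  have hTne : T.Nonempty := by
    obtain ⟨cc, p, hp, hl⟩ := hSne
    exact ⟨p.length, p, hp, rfl⟩
  obtain ⟨p, hp, hpl⟩ := Nat.sInf_mem hTne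
  refine ⟨p, hp, ?_⟩
  have hle : mCplx U w ≤ (p.length : ℕ∞) := mCplx_le_of_mem hp
  have hge : (p.length : ℕ∞) ≤ mCplx U w := by
    apply le_sInf
    rintro b ⟨q, hq, rfl⟩
    rw [hpl]
    have hq' : sInf T ≤ q.length := Nat.sInf_le ⟨q, hq, rfl⟩
    exact_mod_cast hq'
  exact le_antisymm hge hle


lemma setSeg_length (A : Set ℕ) (n : ℕ) : (setSeg A n).length = n := by
  simp [setSeg]

lemma rfind_stage {X : Set ℕ} {c : Code} (hc : ∀ i, i ∈ X ↔ ∃ s, apx c s i = true) (n : ℕ) :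
    Nat.find (settle_exists hc n) ∈
      Nat.rfind fun s => Part.some (decide (segA c s n = setSeg X n)) := by
  apply Nat.mem_rfind.2
  constructor
  · simp only [Part.mem_some_iff]
    exact (decide_eq_true ((segA_eq_setSeg hc).2 (Nat.find_spec (settle_exists hc n)))).symm
  · intro m hm
    simp only [Part.mem_some_iff]
    have : ¬ (segA c m n = setSeg X n) := fun heq =>
      Nat.find_min (settle_exists hc n) hm ((segA_eq_setSeg hc).1 heq)
    simp [this]

lemma uSeg_eq {X Y : Set ℕ} {c₁ c₂ : Code} {s n : ℕ}
    (h₁ : ∀ i < n, apx c₁ s i = decide (i ∈ X))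
    (h₂ : ∀ i < n, apx c₂ s i = decide (i ∈ Y)) :
    uSeg c₁ c₂ s n = setSeg (X ∪ Y) n := by
  unfold uSeg setSeg
  rw [List.map_inj_left]
  intro i hi
  rw [h₁ i (List.mem_range.1 hi), h₂ i (List.mem_range.1 hi)]
  simp [Set.mem_union]

lemma mem_machV_left {X Y : Set ℕ} {c₁ c₂ : Code}
    (hc₁ : ∀ i, i ∈ X ↔ ∃ s, apx c₁ s i = true)
    (hc₂ : ∀ i, i ∈ Y ↔ ∃ s, apx c₂ s i = true)
    {U : List Bool →. List Bool} {p : List Bool} {n : ℕ}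
    (hp : setSeg X n ∈ U p)
    (hle : Nat.find (settle_exists hc₂ n) ≤ Nat.find (settle_exists hc₁ n)) :
    setSeg (X ∪ Y) n ∈ machV U c₁ c₂ (true :: p) := by
  set s₁ := Nat.find (settle_exists hc₁ n) with hs₁
  unfold machV
  simp only [List.head?, List.tail]
  rw [Part.mem_bind_iff]
  refine ⟨true, by simp [Part.ofOption], ?_⟩
  rw [Part.mem_bind_iff]
  refine ⟨setSeg X n, hp, ?_⟩
  rw [Part.mem_map_iff]
  refine ⟨s₁, ?_, ?_⟩
  · simp only [setSeg_length]
    exact rfind_stage hc₁ n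
  · rw [setSeg_length]
    exact uSeg_eq (Nat.find_spec (settle_exists hc₁ n))
      (settle_mono hc₂ hle (Nat.find_spec (settle_exists hc₂ n)))

lemma mem_machV_right {X Y : Set ℕ} {c₁ c₂ : Code}
    (hc₁ : ∀ i, i ∈ X ↔ ∃ s, apx c₁ s i = true)
    (hc₂ : ∀ i, i ∈ Y ↔ ∃ s, apx c₂ s i = true)
    {U : List Bool →. List Bool} {p : List Bool} {n : ℕ}
    (hp : setSeg Y n ∈ U p)
    (hle : Nat.find (settle_exists hc₁ n) ≤ Nat.find (settle_exists hc₂ n)) :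
    setSeg (X ∪ Y) n ∈ machV U c₁ c₂ (false :: p) := by
  set s₂ := Nat.find (settle_exists hc₂ n) with hs₂
  unfold machV
  simp only [List.head?, List.tail]
  rw [Part.mem_bind_iff]
  refine ⟨false, by simp [Part.ofOption], ?_⟩
  rw [Part.mem_bind_iff]
  refine ⟨setSeg Y n, hp, ?_⟩
  rw [Part.mem_map_iff]
  refine ⟨s₂, ?_, ?_⟩
  · simp only [setSeg_length]
    exact rfind_stage hc₂ n
  · rw [setSeg_length]
    exact uSeg_eq (settle_mono hc₁ hle (Nat.find_spec (settle_exists hc₁ n)))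
      (Nat.find_spec (settle_exists hc₂ n))


end Stmt17Aux

/-- For c.e. sets `X, Y` the plain complexity of initial segments of `X ∪ Y` is bounded
by the maximum of those of `X` and `Y`, up to a constant. -/
theorem stmt_17 (U : List Bool →. List Bool) (hU : OptimalPlain U)
    (X Y : Set ℕ) (hX : REPred (· ∈ X)) (hY : REPred (· ∈ Y)) :
    ∃ d : ℕ, ∀ n : ℕ,
      mCplx U (setSeg (X ∪ Y) n) ≤
        max (mCplx U (setSeg X n)) (mCplx U (setSeg Y n)) + (d : ℕ∞) := by
  classical
  obtain ⟨c₁, hc₁⟩ := Stmt17Aux.exists_code_of_re hX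
  obtain ⟨c₂, hc₂⟩ := Stmt17Aux.exists_code_of_re hY
  obtain ⟨d₀, hd₀⟩ := hU.2 (Stmt17Aux.machV U c₁ c₂) (Stmt17Aux.machV_partrec hU.1 c₁ c₂)
  refine ⟨d₀ + 1, fun n => ?_⟩
  by_cases htop : max (mCplx U (setSeg X n)) (mCplx U (setSeg Y n)) = ⊤
  · rw [htop, top_add]
    exact le_top
  · have hA : mCplx U (setSeg X n) ≠ ⊤ := fun h => htop (by simp [h])
    have hB : mCplx U (setSeg Y n) ≠ ⊤ := fun h => htop (by simp [h])
    obtain ⟨pX, hpX, hpXl⟩ := Stmt17Aux.mCplx_attained hA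
    obtain ⟨pY, hpY, hpYl⟩ := Stmt17Aux.mCplx_attained hB
    rcases le_total (Nat.find (Stmt17Aux.settle_exists hc₂ n))
        (Nat.find (Stmt17Aux.settle_exists hc₁ n)) with hle | hle
    · have hmem := Stmt17Aux.mem_machV_left hc₁ hc₂ hpX hle
      have h1 : mCplx (Stmt17Aux.machV U c₁ c₂) (setSeg (X ∪ Y) n) ≤
          (((true :: pX).length : ℕ) : ℕ∞) := Stmt17Aux.mCplx_le_of_mem hmem
      calc mCplx U (setSeg (X ∪ Y) n)
          ≤ mCplx (Stmt17Aux.machV U c₁ c₂) (setSeg (X ∪ Y) n) + (d₀ : ℕ∞) := hd₀ _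
        _ ≤ (((true :: pX).length : ℕ) : ℕ∞) + (d₀ : ℕ∞) := add_le_add_left h1 _
        _ = mCplx U (setSeg X n) + ((d₀ + 1 : ℕ) : ℕ∞) := by
            rw [List.length_cons, ← hpXl]; push_cast; ring
        _ ≤ max (mCplx U (setSeg X n)) (mCplx U (setSeg Y n)) + ((d₀ + 1 : ℕ) : ℕ∞) :=
            add_le_add_left (le_max_left _ _) _
    · have hmem := Stmt17Aux.mem_machV_right hc₁ hc₂ hpY hle
      have h1 : mCplx (Stmt17Aux.machV U c₁ c₂) (setSeg (X ∪ Y) n) ≤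
          (((false :: pY).length : ℕ) : ℕ∞) := Stmt17Aux.mCplx_le_of_mem hmem
      calc mCplx U (setSeg (X ∪ Y) n)
          ≤ mCplx (Stmt17Aux.machV U c₁ c₂) (setSeg (X ∪ Y) n) + (d₀ : ℕ∞) := hd₀ _
        _ ≤ (((false :: pY).length : ℕ) : ℕ∞) + (d₀ : ℕ∞) := add_le_add_left h1 _
        _ = mCplx U (setSeg Y n) + ((d₀ + 1 : ℕ) : ℕ∞) := by
            rw [List.length_cons, ← hpYl]; push_cast; ring
        _ ≤ max (mCplx U (setSeg X n)) (mCplx U (setSeg Y n)) + ((d₀ + 1 : ℕ) : ℕ∞) :=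
            add_le_add_left (le_max_right _ _) _
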